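/- For every positive integer n, e^n is irrational. -/

import Mathlib

noncomputable section
open intervalIntegral Set Real Filter
open scoped Nat

private def J (k : ℕ) (θ : ℝ) : ℝ := ∫ x in (0:ℝ)..1, (x - x^2)^k * Real.exp (θ * x)

private lemma J_zero (θ : ℝ) : J 0 θ * θ = Real.exp θ - 1 := by
  rw [J]
  simp only [pow_zero, one_mul]
  rcases eq_or_ne θ 0 with rfl | h
  · simp
  · have : ∀ x : ℝ, Real.exp (θ * x) = Real.exp (x * θ) := fun x => by rw [mul_comm]
    simp_rw [this]
    rw [intervalIntegral.integral_comp_mul_right Real.exp h]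
    simp [integral_exp, smul_eq_mul]
    field_simp

private lemma J_recursion (k : ℕ) (θ : ℝ) :
    J (k+1) θ * θ^2 = (k+1) * 0^k * (Real.exp θ + 1) + (k+1)*k * J (k-1) θ
      - 2*(k+1)*(2*k+1) * J k θ := by
  let f (x : ℝ) : ℝ := x - x^2
  let u₁ (x : ℝ) : ℝ := f x ^ (k+1)
  let u₁' (x : ℝ) : ℝ := (k+1) * (1 - 2*x) * f x ^ k
  let v (x : ℝ) : ℝ := Real.exp (θ * x)
  let v' (x : ℝ) : ℝ := Real.exp (θ * x) * θ
  let u₂ (x : ℝ) : ℝ := (1 - 2*x) * f x ^ k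
  let u₂' (x : ℝ) : ℝ := k * f x ^ (k-1) - (4*k+2) * f x ^ k
  have hf (x : ℝ) : HasDerivAt f (1 - 2*x) x := by
    exact ((hasDerivAt_id' x).sub (hasDerivAt_pow 2 x)).congr_deriv (by norm_num)
  have hu₁ (x : ℝ) : HasDerivAt u₁ (u₁' x) x := by
    refine ((hf x).fun_pow (k+1)).congr_deriv ?_
    show _ = ((k:ℝ)+1) * (1 - 2*x) * f x ^ k
    rw [Nat.add_sub_cancel]
    push_cast
    ring
  have hv (x : ℝ) : HasDerivAt v (v' x) x := by
    simpa [v, v', mul_comm] using ((hasDerivAt_mul_const θ).exp (x := x))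
  have hu₂ (x : ℝ) : HasDerivAt u₂ (u₂' x) x := by
    have h1 : HasDerivAt (fun x : ℝ => 1 - 2*x) (-2) x := by
      exact ((hasDerivAt_const x (1:ℝ)).sub ((hasDerivAt_id' x).const_mul 2)).congr_deriv (by norm_num)
    have h2 := h1.mul ((hf x).pow k)
    have heq : u₂' x = (-2) * f x ^ k + (1 - 2*x) * (↑k * f x ^ (k-1) * (1 - 2*x)) := by
      simp only [u₂']
      have hsq : (1 - 2*x)^2 = 1 - 4 * f x := by simp only [f]; ring
      cases k with
      | zero => norm_num
      | succ m =>
        have h3 : (↑(m+1) : ℝ) * f x ^ (m+1-1) * (1-2*x) * (1-2*x)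
            = (↑(m+1) : ℝ) * f x ^ m * (1 - 4 * f x) := by
          rw [mul_assoc, ← sq, hsq]; simp
        rw [show m+1-1 = m from rfl] at h3 ⊢
        push_cast at h3 ⊢
        linear_combination -h3 - (4*(m:ℝ)+4) * pow_succ (f x) m
    exact heq ▸ h2
  have hu₁c : Continuous u₁' := by fun_prop
  have hvc : Continuous v' := by fun_prop
  have hu₂c : Continuous u₂' := by
    simp only [u₂']
    fun_prop
  have step1 : J (k+1) θ * θ = - ∫ x in (0:ℝ)..1, u₁' x * v x := by
    have : J (k+1) θ * θ = ∫ x in (0:ℝ)..1, u₁ x * v' x := by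
      rw [J, ← integral_mul_const]
      congr 1 with x
      simp only [u₁, v', f]
      ring
    rw [this, integral_mul_deriv_eq_deriv_mul (fun x _ => hu₁ x) (fun x _ => hv x)
      (hu₁c.intervalIntegrable _ _) (hvc.intervalIntegrable _ _)]
    simp [u₁, f]
  have step2 : (∫ x in (0:ℝ)..1, u₂ x * v' x)
      = - 0^k * (Real.exp θ + 1) - ∫ x in (0:ℝ)..1, u₂' x * v x := by
    rw [integral_mul_deriv_eq_deriv_mul (fun x _ => hu₂ x) (fun x _ => hv x)
      (hu₂c.intervalIntegrable _ _) (hvc.intervalIntegrable _ _)]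
    have : u₂ 1 * v 1 - u₂ 0 * v 0 = - 0^k * (Real.exp θ + 1) := by
      simp only [u₂, v, f]
      norm_num
      ring
    rw [this]
  have step3 : (∫ x in (0:ℝ)..1, u₂' x * v x)
      = k * J (k-1) θ - (4*k+2) * J k θ := by
    rw [J, J, ← integral_const_mul, ← integral_const_mul, ← integral_sub]
    · congr 1 with x
      simp only [u₂', v, f]
      ring
    · exact (Continuous.intervalIntegrable (by fun_prop) _ _)
    · exact (Continuous.intervalIntegrable (by fun_prop) _ _)
  have key : J (k+1) θ * θ^2 = -(k+1) * ∫ x in (0:ℝ)..1, u₂ x * v' x := by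
    have : J (k+1) θ * θ^2 = (J (k+1) θ * θ) * θ := by ring
    rw [this, step1, neg_mul, ← integral_mul_const]
    rw [← integral_const_mul]
    rw [← integral_neg]
    congr 1 with x
    simp only [u₁', u₂, v, v']
    ring
  rw [key, step2, step3]
  ring

private def pp (n : ℕ) : ℕ → ℤ
  | 0 => 1
  | 1 => (n : ℤ) - 2
  | (k+2) => (n:ℤ)^2 * pp n k - 2*(2*k+3) * pp n (k+1)

private def qq (n : ℕ) : ℕ → ℤ
  | 0 => -1
  | 1 => (n : ℤ) + 2
  | (k+2) => (n:ℤ)^2 * qq n k - 2*(2*k+3) * qq n (k+1)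

private lemma key (n : ℕ) (k : ℕ) :
    (n:ℝ)^(2*k+1) * J k n = (k ! : ℝ) * ((pp n k : ℝ) * Real.exp n + (qq n k : ℝ)) := by
  induction k using Nat.twoStepInduction with
  | zero =>
    simp only [pp, qq, mul_zero, pow_one, Nat.factorial_zero]
    push_cast
    rw [mul_comm, pow_one, J_zero (n:ℝ)]
    ring
  | one =>
    have h0 := J_zero (n:ℝ)
    have h1 := J_recursion 0 (n:ℝ)
    simp only [pp, qq, Nat.factorial_one]
    push_cast
    simp only [Nat.cast_zero, pow_zero, Nat.zero_sub, mul_zero, zero_mul] at h1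
    have : J 1 (n:ℝ) * (n:ℝ)^2 = (Real.exp n + 1) - 2 * J 0 (n:ℝ) := by
      rw [h1]; norm_num
    have hJ1 : (n:ℝ)^(2*1+1) * J 1 (n:ℝ) = (n:ℝ) * (J 1 (n:ℝ) * (n:ℝ)^2) := by ring
    rw [hJ1, this]
    have hn0 : (n:ℝ) * (2 * J 0 (n:ℝ)) = 2 * (J 0 (n:ℝ) * (n:ℝ)) := by ring
    calc (n:ℝ) * ((Real.exp n + 1) - 2 * J 0 (n:ℝ))
        = (n:ℝ) * (Real.exp n + 1) - 2 * (J 0 (n:ℝ) * (n:ℝ)) := by ring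
      _ = (n:ℝ) * (Real.exp n + 1) - 2 * (Real.exp n - 1) := by rw [h0]
      _ = 1 * (((n:ℝ) - 2) * Real.exp n + ((n:ℝ) + 2)) := by ring
  | more k ih1 ih2 =>
    have hr := J_recursion (k+1) (n:ℝ)
    rw [zero_pow (Nat.succ_ne_zero k), mul_zero, zero_mul, zero_add] at hr
    have e1 : (n:ℝ)^(2*(k+2)+1) * J (k+2) (n:ℝ)
        = (n:ℝ)^(2*k+3) * (J (k+2) (n:ℝ) * (n:ℝ)^2) := by ring
    have e2 : (k+1+1 : ℕ) - 1 = k + 1 - 0 := rfl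
    rw [e1, hr]
    have hsub : (k+1 : ℕ) - 1 = k := rfl
    rw [hsub]
    have t1 : (n:ℝ)^(2*k+3) * (((k:ℝ)+1+1)*((k:ℝ)+1) * J k (n:ℝ))
        = ((k:ℝ)+1+1)*((k:ℝ)+1) * (n:ℝ)^2 * ((n:ℝ)^(2*k+1) * J k (n:ℝ)) := by ring
    have t2 : (n:ℝ)^(2*k+3) * (2*((k:ℝ)+1+1)*(2*((k:ℝ)+1)+1) * J (k+1) (n:ℝ))
        = 2*((k:ℝ)+1+1)*(2*((k:ℝ)+1)+1) * ((n:ℝ)^(2*(k+1)+1) * J (k+1) (n:ℝ)) := by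
      push_cast; ring
    push_cast
    rw [mul_sub, t1, t2, ih1, ih2]
    simp only [pp, qq]
    push_cast [Nat.factorial_succ]
    ring

private lemma J_pos (k : ℕ) (θ : ℝ) : 0 < J k θ := by
  rw [J]
  apply intervalIntegral.intervalIntegral_pos_of_pos_on
  · exact (Continuous.intervalIntegrable (by fun_prop) _ _)
  · intro x hx
    have h1 : 0 < x - x^2 := by nlinarith [hx.1, hx.2]
    positivity
  · norm_num

private lemma J_le (k : ℕ) (θ : ℝ) (hθ : 0 ≤ θ) : J k θ ≤ (1/4)^k * Real.exp θ := by
  rw [J]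
  calc (∫ x in (0:ℝ)..1, (x - x^2)^k * Real.exp (θ * x))
      ≤ ∫ _x in (0:ℝ)..1, (1/4)^k * Real.exp θ := by
        apply intervalIntegral.integral_mono_on (by norm_num)
          (Continuous.intervalIntegrable (by fun_prop) _ _)
          (Continuous.intervalIntegrable (by fun_prop) _ _)
        intro x hx
        have h1 : 0 ≤ x - x^2 := by nlinarith [hx.1, hx.2]
        have h2 : x - x^2 ≤ 1/4 := by nlinarith [sq_nonneg (x - 1/2)]
        have h3 : Real.exp (θ * x) ≤ Real.exp θ := by
          apply Real.exp_le_exp.2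
          nlinarith [hx.1, hx.2]
        have h4 : (x - x^2)^k ≤ (1/4)^k := pow_le_pow_left₀ h1 h2 k
        have h5 : 0 < Real.exp (θ * x) := Real.exp_pos _
        calc (x - x^2)^k * Real.exp (θ * x) ≤ (1/4)^k * Real.exp (θ * x) := by
              exact mul_le_mul_of_nonneg_right h4 h5.le
          _ ≤ (1/4)^k * Real.exp θ := by
              apply mul_le_mul_of_nonneg_left h3 (by positivity)
  _ = (1/4)^k * Real.exp θ := by simp

theorem exp_pow_irrational (n : ℕ) (hn : 0 < n) :
    Irrational (Real.exp 1 ^ n) := by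
  have hexp : Real.exp 1 ^ n = Real.exp n := by
    rw [← Real.exp_nat_mul]; simp
  rw [hexp]
  rw [Irrational]
  intro hmem
  obtain ⟨r, hr⟩ := Set.mem_range.1 hmem
  have hrpos : (0:ℝ) < (r:ℝ) := hr ▸ Real.exp_pos _
  have hb : (0:ℤ) < (r.den : ℤ) := by exact_mod_cast r.pos
  have ha : (0:ℤ) < r.num := Rat.num_pos.2 (by exact_mod_cast hrpos)
  set a : ℤ := r.num
  set b : ℤ := (r.den : ℤ)
  have hab : (a : ℝ) = (b : ℝ) * Real.exp n := by
    have : (r:ℝ) = (a:ℝ) / (b:ℝ) := by rw [Rat.cast_def]; norm_cast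
    rw [this] at hr
    field_simp at hr
    linarith [hr]
  -- the integer sequence
  have hint : ∀ k : ℕ, (1:ℝ) ≤ ((a * pp n k + b * qq n k : ℤ) : ℝ) := by
    intro k
    have hval : ((a * pp n k + b * qq n k : ℤ) : ℝ)
        = (b:ℝ) * ((n:ℝ)^(2*k+1) * J k n) / (k ! : ℝ) := by
      rw [key n k]
      push_cast
      rw [hab]
      field_simp
    have hpos : (0:ℝ) < ((a * pp n k + b * qq n k : ℤ) : ℝ) := by
      rw [hval]
      have := J_pos k (n:ℝ)
      have hb' : (0:ℝ) < (b:ℝ) := by exact_mod_cast hb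
      have hn' : (0:ℝ) < (n:ℝ) := by exact_mod_cast hn
      positivity
    have : (0:ℤ) < a * pp n k + b * qq n k := by exact_mod_cast hpos
    exact_mod_cast this
  -- the upper bound tends to 0
  have htend : Filter.Tendsto
      (fun k : ℕ => ((b:ℝ) * (n:ℝ) * Real.exp n) * (((n:ℝ)^2/4)^k / (k ! : ℝ)))
      Filter.atTop (nhds 0) := by
    have := FloorSemiring.tendsto_pow_div_factorial_atTop ((n:ℝ)^2/4)
    simpa using this.const_mul ((b:ℝ) * (n:ℝ) * Real.exp n)
  have hlt : ∀ᶠ k in Filter.atTop,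
      ((b:ℝ) * (n:ℝ) * Real.exp n) * (((n:ℝ)^2/4)^k / (k ! : ℝ)) < 1 := by
    have := htend.eventually (eventually_lt_nhds (by norm_num : (0:ℝ) < 1))
    simpa using this
  obtain ⟨k, hk⟩ := hlt.exists
  -- upper bound on the integer
  have hub : ((a * pp n k + b * qq n k : ℤ) : ℝ)
      ≤ ((b:ℝ) * (n:ℝ) * Real.exp n) * (((n:ℝ)^2/4)^k / (k ! : ℝ)) := by
    have hval : ((a * pp n k + b * qq n k : ℤ) : ℝ)
        = (b:ℝ) * ((n:ℝ)^(2*k+1) * J k n) / (k ! : ℝ) := by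
      rw [key n k]
      push_cast
      rw [hab]
      field_simp
    rw [hval]
    have hb' : (0:ℝ) < (b:ℝ) := by exact_mod_cast hb
    have hle := J_le k (n:ℝ) (by positivity)
    have hfac : (0:ℝ) < (k ! : ℝ) := by exact_mod_cast k.factorial_pos
    rw [div_le_iff₀ hfac]
    have hnn : (0:ℝ) ≤ (n:ℝ)^(2*k+1) := by positivity
    calc (b:ℝ) * ((n:ℝ)^(2*k+1) * J k n)
        ≤ (b:ℝ) * ((n:ℝ)^(2*k+1) * ((1/4)^k * Real.exp n)) := by
          apply mul_le_mul_of_nonneg_left _ hb'.le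
          exact mul_le_mul_of_nonneg_left hle hnn
      _ = ((b:ℝ) * (n:ℝ) * Real.exp n) * (((n:ℝ)^2/4)^k) := by
          rw [div_pow, one_pow, pow_succ, pow_mul]
          field_simp
          rw [← mul_pow]; congr 1; ring
      _ = ((b:ℝ) * (n:ℝ) * Real.exp n) * (((n:ℝ)^2/4)^k / (k ! : ℝ)) * (k ! : ℝ) := by
          field_simp
  linarith [hint k, hub, hk]
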